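/- Let d ≥ 1, k ≥ 1, G ≥ 0, η_θ > 0, η_λ > 0. Let F : ℝ^d × Δ_k → ℝ be such that θ ↦ F(θ, λ) is G-Lipschitz for every λ ∈ Δ_k, and suppose P(θ) := max_{λ ∈ Δ_k} F(θ, λ) is attained at some λ*(θ) for every θ. Let (θ_t)_{t ≥ 0} in ℝ^d and (λ_t)_{t ≥ 0} in Δ_k (with every λ_t having strictly positive entries) satisfy, for every t ≥ 1: (i) ‖θ_t − θ_{t−1}‖₂ ≤ η_θ G, and (ii) the mirror-ascent regret inequality F(θ_{t−1}, μ) − F(θ_{t−1}, λ_t) ≤ (1/η_λ)(KL(μ‖λ_{t−1}) − KL(μ‖λ_t)) for all μ ∈ Δ_k. Define Δ_t := P(θ_t) − F(θ_t, λ_t). Then for every t ≥ 1 and every 0 ≤ τ ≤ t − 1: Δ_{t−1} ≤ η_θ G²(2t − 2τ − 1) + (F(θ_t, λ_t) − F(θ_{t−1}, λ_{t−1})) + (1/η_λ)(KL(λ*(θ_τ)‖λ_{t−1}) − KL(λ*(θ_τ)‖λ_t)). -/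
import Mathlib


open Finset

/-- Kullback–Leibler divergence on the probability simplex (convention
`0 log 0 = 0`, which holds since `Real.log 0 = 0`). -/
noncomputable def KL {k : ℕ} (μ ν : Fin k → ℝ) : ℝ :=
  ∑ i, μ i * Real.log (μ i / ν i)

/-- Deterministic recursion for the dual error
`Δ_t = P(θ_t) − F(θ_t, λ_t)` along the gradient-descent / mirror-ascent
iterates: for every `t ≥ 1` and `0 ≤ τ ≤ t − 1`,
`Δ_{t−1} ≤ η_θ G²(2t − 2τ − 1) + (F(θ_t,λ_t) − F(θ_{t−1},λ_{t−1}))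
           + (1/η_λ)(KL(λ*(θ_τ)‖λ_{t−1}) − KL(λ*(θ_τ)‖λ_t))`. -/
theorem dual_error_recursion
    (d k : ℕ) (hd : 1 ≤ d) (hk : 1 ≤ k)
    (G ηθ ηl : ℝ) (hG : 0 ≤ G) (hηθ : 0 < ηθ) (hηl : 0 < ηl)
    (F : EuclideanSpace ℝ (Fin d) → (Fin k → ℝ) → ℝ)
    (lstar : EuclideanSpace ℝ (Fin d) → (Fin k → ℝ))
    (hlstar_mem : ∀ θ, lstar θ ∈ stdSimplex ℝ (Fin k))
    (hlstar_max : ∀ θ, ∀ μ ∈ stdSimplex ℝ (Fin k), F θ μ ≤ F θ (lstar θ))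
    (hLip : ∀ l ∈ stdSimplex ℝ (Fin k), ∀ θ θ' : EuclideanSpace ℝ (Fin d),
      |F θ l - F θ' l| ≤ G * ‖θ - θ'‖)
    (θseq : ℕ → EuclideanSpace ℝ (Fin d)) (lseq : ℕ → (Fin k → ℝ))
    (hlseq_mem : ∀ t, lseq t ∈ stdSimplex ℝ (Fin k))
    (hlseq_pos : ∀ t i, 0 < lseq t i)
    (hstep : ∀ t : ℕ, 1 ≤ t → ‖θseq t - θseq (t - 1)‖ ≤ ηθ * G)
    (hregret : ∀ t : ℕ, 1 ≤ t → ∀ μ ∈ stdSimplex ℝ (Fin k),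
      F (θseq (t - 1)) μ - F (θseq (t - 1)) (lseq t)
        ≤ (1 / ηl) * (KL μ (lseq (t - 1)) - KL μ (lseq t))) :
    ∀ t τ : ℕ, 1 ≤ t → τ ≤ t - 1 →
      F (θseq (t - 1)) (lstar (θseq (t - 1))) - F (θseq (t - 1)) (lseq (t - 1))
        ≤ ηθ * G ^ 2 * (2 * (t : ℝ) - 2 * (τ : ℝ) - 1)
          + (F (θseq t) (lseq t) - F (θseq (t - 1)) (lseq (t - 1)))
          + (1 / ηl) *
              (KL (lstar (θseq τ)) (lseq (t - 1)) - KL (lstar (θseq τ)) (lseq t)) := by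
  intro t τ ht hτ
  obtain ⟨s, rfl⟩ : ∃ s, t = s + 1 := ⟨t - 1, (Nat.succ_pred_eq_of_pos ht).symm⟩
  simp only [Nat.add_sub_cancel] at hτ ⊢
  -- telescoping bound on the θ increments
  have tele : ∀ a b : ℕ, a ≤ b → ‖θseq b - θseq a‖ ≤ ((b : ℝ) - a) * (ηθ * G) := by
    intro a b hab
    induction b, hab using Nat.le_induction with
    | base => simp
    | succ n hn ih =>
      have h1 : ‖θseq (n + 1) - θseq n‖ ≤ ηθ * G := by
        have := hstep (n + 1) (Nat.le_add_left 1 n)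
        simpa using this
      calc ‖θseq (n + 1) - θseq a‖
          ≤ ‖θseq (n + 1) - θseq n‖ + ‖θseq n - θseq a‖ := norm_sub_le_norm_sub_add_norm_sub _ _ _
        _ ≤ ηθ * G + ((n : ℝ) - a) * (ηθ * G) := add_le_add h1 ih
        _ = (((n : ℕ) + 1 : ℝ) - a) * (ηθ * G) := by ring
        _ = ((((n + 1 : ℕ) : ℝ)) - a) * (ηθ * G) := by push_cast; ring
  have hθsτ : ‖θseq s - θseq τ‖ ≤ ((s : ℝ) - τ) * (ηθ * G) := tele τ s hτ
  have hηG : 0 ≤ ηθ * G := mul_nonneg hηθ.le hG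
  -- Lipschitz transfer lemmas
  have lip : ∀ l ∈ stdSimplex ℝ (Fin k), ∀ θ θ' : EuclideanSpace ℝ (Fin d),
      F θ l - F θ' l ≤ G * ‖θ - θ'‖ := by
    intro l hl θ θ'
    exact (abs_le.mp (hLip l hl θ θ')).2
  have h1 : F (θseq s) (lstar (θseq s)) - F (θseq τ) (lstar (θseq s))
      ≤ G * ‖θseq s - θseq τ‖ := lip _ (hlstar_mem _) _ _
  have h2 : F (θseq τ) (lstar (θseq s)) ≤ F (θseq τ) (lstar (θseq τ)) :=
    hlstar_max _ _ (hlstar_mem _)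
  have h3 : F (θseq τ) (lstar (θseq τ)) - F (θseq s) (lstar (θseq τ))
      ≤ G * ‖θseq s - θseq τ‖ := by
    have := lip _ (hlstar_mem (θseq τ)) (θseq τ) (θseq s)
    rwa [norm_sub_rev] at this
  have h5 : F (θseq s) (lstar (θseq τ)) - F (θseq s) (lseq (s + 1))
      ≤ (1 / ηl) * (KL (lstar (θseq τ)) (lseq s) - KL (lstar (θseq τ)) (lseq (s + 1))) := by
    have := hregret (s + 1) (Nat.le_add_left 1 s) (lstar (θseq τ)) (hlstar_mem _)
    simpa using this
  have h6 : F (θseq s) (lseq (s + 1)) - F (θseq (s + 1)) (lseq (s + 1))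
      ≤ G * ‖θseq s - θseq (s + 1)‖ := lip _ (hlseq_mem _) _ _
  have h7 : ‖θseq s - θseq (s + 1)‖ ≤ ηθ * G := by
    have := hstep (s + 1) (Nat.le_add_left 1 s)
    rw [norm_sub_rev]
    simpa using this
  have hGnorm : G * ‖θseq s - θseq τ‖ ≤ G * (((s : ℝ) - τ) * (ηθ * G)) :=
    mul_le_mul_of_nonneg_left hθsτ hG
  have hG7 : G * ‖θseq s - θseq (s + 1)‖ ≤ G * (ηθ * G) :=
    mul_le_mul_of_nonneg_left h7 hG
  have hcast : ((s + 1 : ℕ) : ℝ) = (s : ℝ) + 1 := by push_cast; ring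
  rw [hcast]
  nlinarith [h1, h2, h3, h5, h6, hGnorm, hG7]
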